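/- arXiv:2208.02636 — 2 statements merged into one kernel-verified Lean document; each statement's English description precedes it below -/
import Mathlib

section
/- For each k ∈ ℕ, the subspace t^k ℂ[s,t,v] is a 𝔱𝔰𝔳-submodule of the module Φ(λ, a, b, q, {τ_i}, {γ_j}); i.e. the actions of all L_m, Y_m, M_m defined by (2.10)–(2.12) preserve t^k ℂ[s,t,v]. In particular, Φ(λ, a, b, q, {τ_i}, {γ_j}) is a reducible 𝔱𝔰𝔳-module. -/
open MvPolynomial

noncomputable section

/-- `ℂ[s,t,v]` with `s = X 0`, `t = X 1`, `v = X 2`. -/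
abbrev R3 : Type := MvPolynomial (Fin 3) ℂ

/-- The shift `f(s,t,v) ↦ f(s+m,t,v)`. -/
def shiftS (m : ℤ) : R3 →ₐ[ℂ] R3 :=
  aeval (fun i => if i = 0 then X 0 + C (m : ℂ) else X i)

/-- Embedding `ℂ[t] → ℂ[s,t,v]`, `t ↦ X 1`. -/
def tp (p : Polynomial ℂ) : R3 := Polynomial.aeval (X 1 : R3) p

/-- The action `M_m · f(s,t,v) = λ^m t f(s+m,t,v)` of formula (2.11). -/
def Mact (lam : ℂ) (m : ℤ) (f : R3) : R3 := lam ^ m • (X 1 * shiftS m f)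

/-- The action (2.12):
`Y_m · f = λ^m [(m Σ_{i=0}^q τ_i v^i + v + a m² t + (1-δ_{m,0}) b) f(s+m,t,v)
  + m t ∂f/∂v(s+m,t,v)]`, where `τ_i = t σ_i ∈ tℂ[t]`. -/
def Yact (lam a b : ℂ) (q : ℕ) (σ : ℕ → Polynomial ℂ) (m : ℤ) (f : R3) : R3 :=
  lam ^ m •
    (((m : ℂ) • (∑ i ∈ Finset.range (q + 1), tp (Polynomial.X * σ i) * X 2 ^ i) + X 2
        + C (a * (m : ℂ) ^ 2) * X 1 + C (if m = 0 then 0 else b)) * shiftS m f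
      + (m : ℂ) • (X 1 * pderiv 2 (shiftS m f)))

/-- The coefficient polynomial `D_m + γ_m/t` appearing in formula (2.10):
`(m/t)(Σ_{i=0}^q (-τ_i + 3τ_i/(i+1) - 3t τ_i'/(i+1)) v^{i+1} - (m/2) t Σ i τ_i v^{i-1}`
`- (m/2)(Σ τ_i v^i)² + 3amtv - (am²t+b) Σ τ_i v^i) + γ_m/t`,
written polynomially via `τ_i = t σ_i ∈ tℂ[t]` and `γ_j = t g_j ∈ tℂ[t]`. -/
def Dcoef (a b : ℂ) (q : ℕ) (σ : ℕ → Polynomial ℂ) (g : ℤ → Polynomial ℂ) (m : ℤ) : R3 :=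
  (m : ℂ) •
    ((∑ i ∈ Finset.range (q + 1),
        (C (-1 + 3 / ((i : ℂ) + 1)) * tp (σ i)
          - C (3 / ((i : ℂ) + 1)) * tp (Polynomial.derivative (Polynomial.X * σ i)))
        * X 2 ^ (i + 1))
      - ((m : ℂ) / 2) •
          (∑ i ∈ Finset.range (q + 1), ((i : ℂ)) • (tp (Polynomial.X * σ i) * X 2 ^ (i - 1)))
      - ((m : ℂ) / 2) •
          (X 1 * (∑ i ∈ Finset.range (q + 1), tp (σ i) * X 2 ^ i) ^ 2)
      + (3 * a * (m : ℂ)) • X 2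
      - (C (a * (m : ℂ) ^ 2) * X 1 + C b)
          * (∑ i ∈ Finset.range (q + 1), tp (σ i) * X 2 ^ i))
  + tp (g m)

/-- The action (2.10):
`L_m · f = λ^m [(s + D_m + γ_m/t) f(s+m,t,v) - 3mt ∂_t f(s+m,t,v)`
`- m(m Σ τ_i v^i + v + am²t + b) ∂_v f(s+m,t,v) - (m²/2) t ∂_v² f(s+m,t,v)]`. -/
def Lact (lam a b : ℂ) (q : ℕ) (σ : ℕ → Polynomial ℂ) (g : ℤ → Polynomial ℂ)
    (m : ℤ) (f : R3) : R3 :=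
  lam ^ m •
    ((X 0 + Dcoef a b q σ g m) * shiftS m f
      - (3 * (m : ℂ)) • (X 1 * pderiv 1 (shiftS m f))
      - (m : ℂ) •
          (((m : ℂ) • (∑ i ∈ Finset.range (q + 1), tp (Polynomial.X * σ i) * X 2 ^ i)
              + X 2 + C (a * (m : ℂ) ^ 2) * X 1 + C b) * pderiv 2 (shiftS m f))
      - ((m : ℂ) ^ 2 / 2) • (X 1 * pderiv 2 (pderiv 2 (shiftS m f)))) 

lemma dvd_shiftS (k : ℕ) (m : ℤ) {p : R3} (h : (X 1 : R3) ^ k ∣ p) :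
    (X 1 : R3) ^ k ∣ shiftS m p := by
  obtain ⟨h, rfl⟩ := h
  rw [map_mul, map_pow]
  have hx : shiftS m (X 1 : R3) = X 1 := by
    simp [shiftS]
  rw [hx]
  exact Dvd.intro _ rfl

lemma dvd_pd2 (k : ℕ) {p : R3} (h : (X 1 : R3) ^ k ∣ p) :
    (X 1 : R3) ^ k ∣ pderiv 2 p := by
  obtain ⟨h, rfl⟩ := h
  rw [pderiv_mul]
  have hx : (pderiv 2) ((X 1 : R3) ^ k) = 0 := by
    rw [Derivation.leibniz_pow]
    simp [pderiv_X]
  rw [hx]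
  simp [Dvd.intro _ rfl]

lemma dvd_pd1 (k : ℕ) {p : R3} (h : (X 1 : R3) ^ k ∣ p) :
    (X 1 : R3) ^ k ∣ X 1 * pderiv 1 p := by
  obtain ⟨h, rfl⟩ := h
  cases k with
  | zero => simp
  | succ n =>
    rw [pderiv_mul, Derivation.leibniz_pow, pderiv_X_self]
    refine ⟨(n + 1 : ℕ) • h + X 1 * pderiv 1 h, ?_⟩
    simp only [smul_mul_assoc, mul_add, nsmul_eq_mul, smul_eq_mul]
    push_cast
    ring

lemma dvd_smul (c : ℂ) {p : R3} (k : ℕ) (h : (X 1 : R3) ^ k ∣ p) :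
    (X 1 : R3) ^ k ∣ c • p := by
  rw [smul_eq_C_mul]; exact h.mul_left _

/-- For each `k ∈ ℕ`, the subspace `t^k ℂ[s,t,v]` is a 𝔱𝔰𝔳-submodule of
`Φ(λ, a, b, q, {τ_i}, {γ_j})`: the actions (2.10)–(2.12) of all `L_m`, `Y_m`, `M_m`
preserve `t^k ℂ[s,t,v]` (here `τ_i = t σ_i`, `γ_j = t g_j`, `γ_0 = 0`).
In particular `Φ(λ, a, b, q, {τ_i}, {γ_j})` is reducible. -/
theorem stmt_8 (lam : ℂ) (hlam : lam ≠ 0) (a b : ℂ) (q : ℕ)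
    (σ : ℕ → Polynomial ℂ) (g : ℤ → Polynomial ℂ) (hg0 : g 0 = 0) (k : ℕ) :
    ∀ (m : ℤ) (f : R3), (X 1 : R3) ^ k ∣ f →
      (X 1 : R3) ^ k ∣ Lact lam a b q σ g m f ∧
      (X 1 : R3) ^ k ∣ Yact lam a b q σ m f ∧
      (X 1 : R3) ^ k ∣ Mact lam m f := by
  intro m f hf
  have hs : (X 1 : R3) ^ k ∣ shiftS m f := dvd_shiftS k m hf
  refine ⟨?_, ?_, ?_⟩
  · exact dvd_smul _ _ (((((hs.mul_left _).sub
      (dvd_smul _ _ (dvd_pd1 k hs))).sub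
      (dvd_smul _ _ ((dvd_pd2 k hs).mul_left _))).sub
      (dvd_smul _ _ ((dvd_pd2 k (dvd_pd2 k hs)).mul_left _))))
  · exact dvd_smul _ _ ((hs.mul_left _).add
      (dvd_smul _ _ ((dvd_pd2 k hs).mul_left _)))
  · exact dvd_smul _ _ (hs.mul_left _)

end
end

section
/- Two modules Φ(λ, a, b, q, {τ_i}, {γ_j}) and Φ(λ', a', b', q', {τ'_i}, {γ'_j}) over 𝔱𝔰𝔳 are isomorphic if and only if (λ, a, b, q, {τ_i}, {γ_j}) = (λ', a', b', q', {τ'_i}, {γ'_j}) (where τ_q ≠ 0, τ'_{q'} ≠ 0 so that q is well defined). -/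
open MvPolynomial

noncomputable section

lemma single_eq_addsingle_iff (n d e : ℕ) :
    (Finsupp.single (1 : Fin 3) n = Finsupp.single 1 d + Finsupp.single 2 e) ↔ (n = d ∧ e = 0) := by
  constructor
  · intro h
    have h1 := DFunLike.congr_fun h (1 : Fin 3)
    have h2 := DFunLike.congr_fun h (2 : Fin 3)
    simp [Finsupp.single_apply, Finsupp.add_apply] at h1 h2
    exact ⟨h1, h2.symm⟩
  · rintro ⟨rfl, rfl⟩; simp

lemma coeff_tp_aux (p : Polynomial ℂ) (d e : ℕ) :
    coeff (Finsupp.single 1 d + Finsupp.single 2 e) (tp p) = if e = 0 then p.coeff d else 0 := by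
  induction p using Polynomial.induction_on' with
  | add f g hf hg =>
    rw [tp, map_add, coeff_add, ← tp, ← tp, hf, hg, Polynomial.coeff_add]
    split <;> simp
  | monomial n c =>
    have : tp (Polynomial.monomial n c) = monomial (Finsupp.single 1 n) c := by
      simp [tp, Polynomial.aeval_monomial, X_pow_eq_monomial, algebraMap_eq, C_mul_monomial]
    rw [this, coeff_monomial]
    simp only [single_eq_addsingle_iff, Polynomial.coeff_monomial]
    by_cases he : e = 0 <;> by_cases hn : n = d <;> simp [he, hn]

lemma coeff_tp (p : Polynomial ℂ) (d : ℕ) :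
    coeff (Finsupp.single 1 d) (tp p) = p.coeff d := by
  have := coeff_tp_aux p d 0
  simpa using this

lemma tp_inj : Function.Injective tp := by
  intro p p' h
  ext d
  rw [← coeff_tp p d, ← coeff_tp p' d, h]

lemma sub_single (d j i : ℕ) (hij : i ≤ j) :
    (Finsupp.single (1:Fin 3) d + Finsupp.single 2 j) - Finsupp.single 2 i
      = Finsupp.single 1 d + Finsupp.single 2 (j - i) := by
  ext x
  simp only [Finsupp.sub_apply, Finsupp.add_apply, Finsupp.single_apply]
  fin_cases x <;> simp <;> omega

lemma le_addsingle (d j i : ℕ) :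
    (Finsupp.single (2:Fin 3) i ≤ Finsupp.single 1 d + Finsupp.single 2 j) ↔ i ≤ j := by
  constructor
  · intro h
    have := h (2 : Fin 3)
    simpa [Finsupp.single_apply, Finsupp.add_apply] using this
  · intro h x
    simp only [Finsupp.add_apply, Finsupp.single_apply]
    fin_cases x <;> simp <;> omega

lemma coeff_tp_mul_X2pow (p : Polynomial ℂ) (d j i : ℕ) :
    coeff (Finsupp.single 1 d + Finsupp.single 2 j) (tp p * X 2 ^ i)
      = if i = j then p.coeff d else 0 := by
  rw [X_pow_eq_monomial, coeff_mul_monomial']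
  by_cases h : i ≤ j
  · rw [if_pos ((le_addsingle d j i).2 h), sub_single d j i h, coeff_tp_aux, mul_one]
    by_cases hij : i = j
    · simp [hij]
    · rw [if_neg (by omega : ¬ j - i = 0), if_neg hij]
  · rw [if_neg (fun hc => h ((le_addsingle d j i).1 hc)), if_neg (by omega)]

lemma coeff_sum_tp (Q : ℕ) (p : ℕ → Polynomial ℂ) (d j : ℕ) :
    coeff (Finsupp.single 1 d + Finsupp.single 2 j)
        (∑ i ∈ Finset.range (Q + 1), tp (p i) * X 2 ^ i)
      = if j ≤ Q then (p j).coeff d else 0 := by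
  rw [coeff_sum]
  rw [Finset.sum_congr rfl (fun i _ => coeff_tp_mul_X2pow (p i) d j i)]
  rw [Finset.sum_ite_eq' (Finset.range (Q+1)) j (fun i => (p i).coeff d)]
  simp [Nat.lt_succ_iff]

lemma isUnit_mv {n : ℕ} (u : MvPolynomial (Fin n) ℂ) (h : IsUnit u) : ∃ c : ℂ, u = C c := by
  induction n with
  | zero => exact ⟨coeff 0 u, eq_C_of_isEmpty u⟩
  | succ n ih =>
    have h2 : IsUnit (finSuccEquiv ℂ n u) := h.map _
    obtain ⟨r, hr, hru⟩ := Polynomial.isUnit_iff.1 h2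
    obtain ⟨c, rfl⟩ := ih r hr
    refine ⟨c, ?_⟩
    have := congrArg (finSuccEquiv ℂ n).symm hru
    rw [AlgEquiv.symm_apply_apply] at this
    rw [← this]
    have h3 := congrFun (congrArg (fun f => f.toFun) (finSuccEquiv_comp_C_eq_C (R := ℂ) n)) c
    simpa using h3


lemma shiftS_zero (f : R3) : shiftS 0 f = f := by
  have : (fun i : Fin 3 => if i = 0 then X 0 + C ((0:ℤ) : ℂ) else X i) = X := by
    funext i; fin_cases i <;> simp
  rw [shiftS, this]
  simp [aeval_X_left]

lemma shiftS_one (m : ℤ) : shiftS m 1 = 1 := map_one _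

lemma Mact_zero (lam : ℂ) (f : R3) : Mact lam 0 f = X 1 * f := by
  simp [Mact, shiftS_zero]

lemma Yact_zero (lam a b : ℂ) (q : ℕ) (σ : ℕ → Polynomial ℂ) (f : R3) :
    Yact lam a b q σ 0 f = X 2 * f := by
  simp [Yact, shiftS_zero]

lemma Lact_zero (lam a b : ℂ) (q : ℕ) (σ : ℕ → Polynomial ℂ) (g : ℤ → Polynomial ℂ)
    (hg0 : g 0 = 0) (f : R3) : Lact lam a b q σ g 0 f = X 0 * f := by
  simp [Lact, Dcoef, shiftS_zero, hg0, tp]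

lemma Mact_one (lam : ℂ) (m : ℤ) : Mact lam m 1 = lam ^ m • X 1 := by
  simp [Mact, shiftS_one]

lemma Yact_one (lam a b : ℂ) (q : ℕ) (σ : ℕ → Polynomial ℂ) (m : ℤ) :
    Yact lam a b q σ m 1 = lam ^ m •
      ((m : ℂ) • (∑ i ∈ Finset.range (q + 1), tp (Polynomial.X * σ i) * X 2 ^ i) + X 2
        + C (a * (m : ℂ) ^ 2) * X 1 + C (if m = 0 then 0 else b)) := by
  simp [Yact, shiftS_one]

lemma Lact_one (lam a b : ℂ) (q : ℕ) (σ : ℕ → Polynomial ℂ) (g : ℤ → Polynomial ℂ) (m : ℤ) :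
    Lact lam a b q σ g m 1 = lam ^ m • (X 0 + Dcoef a b q σ g m) := by
  simp [Lact, shiftS_one]

lemma Mact_smul (lam c : ℂ) (m : ℤ) (f : R3) : Mact lam m (c • f) = c • Mact lam m f := by
  simp [Mact, map_smul, mul_smul_comm, smul_comm c]

lemma Yact_smul (lam a b c : ℂ) (q : ℕ) (σ : ℕ → Polynomial ℂ) (m : ℤ) (f : R3) :
    Yact lam a b q σ m (c • f) = c • Yact lam a b q σ m f := by
  simp only [Yact, map_smul, Derivation.map_smul, mul_smul_comm, smul_add, smul_sub]
  module

lemma Lact_smul (lam a b c : ℂ) (q : ℕ) (σ : ℕ → Polynomial ℂ) (g : ℤ → Polynomial ℂ)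
    (m : ℤ) (f : R3) : Lact lam a b q σ g m (c • f) = c • Lact lam a b q σ g m f := by
  simp only [Lact, map_smul, Derivation.map_smul, mul_smul_comm, smul_add, smul_sub]
  module

lemma Dcoef_congr (a b : ℂ) (q : ℕ) (σ σ' : ℕ → Polynomial ℂ) (g : ℤ → Polynomial ℂ) (m : ℤ)
    (h : ∀ i ≤ q, σ i = σ' i) : Dcoef a b q σ g m = Dcoef a b q σ' g m := by
  have e1 : (∑ i ∈ Finset.range (q + 1),
        (C (-1 + 3 / ((i : ℂ) + 1)) * tp (σ i)
          - C (3 / ((i : ℂ) + 1)) * tp (Polynomial.derivative (Polynomial.X * σ i)))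
        * X 2 ^ (i + 1))
      = (∑ i ∈ Finset.range (q + 1),
        (C (-1 + 3 / ((i : ℂ) + 1)) * tp (σ' i)
          - C (3 / ((i : ℂ) + 1)) * tp (Polynomial.derivative (Polynomial.X * σ' i)))
        * X 2 ^ (i + 1)) :=
    Finset.sum_congr rfl fun i hi => by rw [h i (Finset.mem_range_succ_iff.mp hi)]
  have e2 : (∑ i ∈ Finset.range (q + 1), ((i : ℂ)) • (tp (Polynomial.X * σ i) * X 2 ^ (i - 1)))
      = (∑ i ∈ Finset.range (q + 1), ((i : ℂ)) • (tp (Polynomial.X * σ' i) * X 2 ^ (i - 1))) :=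
    Finset.sum_congr rfl fun i hi => by rw [h i (Finset.mem_range_succ_iff.mp hi)]
  have e3 : (∑ i ∈ Finset.range (q + 1), tp (σ i) * X 2 ^ i)
      = (∑ i ∈ Finset.range (q + 1), tp (σ' i) * X 2 ^ i) :=
    Finset.sum_congr rfl fun i hi => by rw [h i (Finset.mem_range_succ_iff.mp hi)]
  unfold Dcoef
  rw [e1, e2, e3]

lemma sum_congr_X (q : ℕ) (σ σ' : ℕ → Polynomial ℂ) (h : ∀ i ≤ q, σ i = σ' i) :
    (∑ i ∈ Finset.range (q + 1), tp (Polynomial.X * σ i) * X 2 ^ i)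
      = ∑ i ∈ Finset.range (q+1), tp (Polynomial.X * σ' i) * X 2 ^ i :=
  Finset.sum_congr rfl fun i hi => by rw [h i (Finset.mem_range_succ_iff.mp hi)]


/-- Two modules `Φ(λ, a, b, q, {τ_i}, {γ_j})` and `Φ(λ', a', b', q', {τ'_i}, {γ'_j})`
over 𝔱𝔰𝔳 (with `τ_q ≠ 0`, `τ'_{q'} ≠ 0` so that `q` is well defined; here `τ_i = t σ_i`,
`γ_j = t g_j`, so `τ_q ≠ 0 ↔ σ q ≠ 0` and the equalities `τ_i = τ'_i`, `γ_j = γ'_j`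
amount to `σ i = σ' i`, `g j = g' j`) are isomorphic — i.e. there is a ℂ-linear
bijection of `ℂ[s,t,v]` commuting with the actions of all `L_m`, `Y_m`, `M_m` —
if and only if `(λ, a, b, q, {τ_i}, {γ_j}) = (λ', a', b', q', {τ'_i}, {γ'_j})`. -/
theorem stmt_9 (lam lam' : ℂ) (hlam : lam ≠ 0) (hlam' : lam' ≠ 0)
    (a a' b b' : ℂ) (q q' : ℕ)
    (σ σ' : ℕ → Polynomial ℂ) (g g' : ℤ → Polynomial ℂ)
    (hg0 : g 0 = 0) (hg0' : g' 0 = 0) (hσq : σ q ≠ 0) (hσq' : σ' q' ≠ 0) :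
    (∃ φ : R3 ≃ₗ[ℂ] R3, ∀ (m : ℤ) (f : R3),
        φ (Lact lam a b q σ g m f) = Lact lam' a' b' q' σ' g' m (φ f) ∧
        φ (Yact lam a b q σ m f) = Yact lam' a' b' q' σ' m (φ f) ∧
        φ (Mact lam m f) = Mact lam' m (φ f)) ↔
      (lam = lam' ∧ a = a' ∧ b = b' ∧ q = q' ∧
        (∀ i ≤ q, σ i = σ' i) ∧ (∀ j : ℤ, g j = g' j)) := by
  constructor
  · rintro ⟨φ, hφ⟩
    -- φ commutes with multiplication by the variables
    have hM0 : ∀ f, φ (X 1 * f) = X 1 * φ f := fun f => by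
      have h := (hφ 0 f).2.2; rwa [Mact_zero, Mact_zero] at h
    have hY0 : ∀ f, φ (X 2 * f) = X 2 * φ f := fun f => by
      have h := (hφ 0 f).2.1; rwa [Yact_zero, Yact_zero] at h
    have hL0 : ∀ f, φ (X 0 * f) = X 0 * φ f := fun f => by
      have h := (hφ 0 f).1
      rwa [Lact_zero _ _ _ _ _ _ hg0, Lact_zero _ _ _ _ _ _ hg0'] at h
    have hXc : ∀ (i : Fin 3) (f : R3), φ (X i * f) = X i * φ f := by
      intro i
      fin_cases i
      · exact hL0
      · exact hM0
      · exact hY0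
    have hmul : ∀ p f : R3, φ (p * f) = p * φ f := by
      intro p
      induction p using MvPolynomial.induction_on with
      | C α => intro f; rw [C_mul', map_smul, C_mul']
      | add p r hp hr => intro f; rw [add_mul, map_add, hp, hr, add_mul]
      | mul_X p i hp =>
        intro f
        rw [mul_assoc, hp, hXc, ← mul_assoc]
    -- φ is multiplication by a nonzero constant
    obtain ⟨h0, hh0⟩ := φ.surjective 1
    have hunit : IsUnit (φ 1) := IsUnit.of_mul_eq_one h0 (by
      rw [mul_comm]
      have := hmul h0 1
      rw [mul_one] at this
      rw [← this, hh0])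
    obtain ⟨c, hc⟩ := isUnit_mv _ hunit
    have hcne : c ≠ 0 := by
      intro h
      rw [h] at hc
      have h1 : φ (1 : R3) = φ 0 := by rw [hc, map_zero]; simp
      exact one_ne_zero (φ.injective h1)
    have hφeq : ∀ f : R3, φ f = c • f := fun f => by
      have := hmul f 1
      rw [mul_one] at this
      rw [this, hc, mul_comm, C_mul']
    -- equal actions on 1
    have keyL : ∀ m : ℤ, Lact lam a b q σ g m 1 = Lact lam' a' b' q' σ' g' m 1 := fun m => by
      have h := (hφ m 1).1
      rw [hφeq, hφeq, Lact_smul] at h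
      exact smul_right_injective R3 hcne h
    have keyY : ∀ m : ℤ, Yact lam a b q σ m 1 = Yact lam' a' b' q' σ' m 1 := fun m => by
      have h := (hφ m 1).2.1
      rw [hφeq, hφeq, Yact_smul] at h
      exact smul_right_injective R3 hcne h
    have keyM := fun m : ℤ => by
      have h := (hφ m 1).2.2
      rw [hφeq, hφeq, Mact_smul] at h
      exact smul_right_injective R3 hcne h
    -- λ = λ'
    have hlameq : lam = lam' := by
      have h := keyM 1
      rw [Mact_one, Mact_one, zpow_one, zpow_one] at h
      have h2 := congrArg (coeff (Finsupp.single 1 1)) h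
      simpa [coeff_smul, coeff_X] using h2
    subst hlameq
    -- the Y equations
    have keyYm : ∀ m : ℤ,
        ((m:ℂ) • (∑ i ∈ Finset.range (q + 1), tp (Polynomial.X * σ i) * X 2 ^ i) + X 2
          + C (a * (m:ℂ)^2) * X 1 + C (if m = 0 then 0 else b))
        = ((m:ℂ) • (∑ i ∈ Finset.range (q' + 1), tp (Polynomial.X * σ' i) * X 2 ^ i) + X 2
          + C (a' * (m:ℂ)^2) * X 1 + C (if m = 0 then 0 else b')) := fun m => by
      have h := keyY m
      rw [Yact_one, Yact_one] at h
      exact smul_right_injective R3 (zpow_ne_zero m hlam) h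
    -- auxiliary coefficient computations
    have hμ : (Finsupp.single (1:Fin 3) 1 + Finsupp.single 2 0) = Finsupp.single 1 1 := by simp
    have hX2tp : (X 2 : R3) = tp 1 * X 2 ^ 1 := by simp [tp]
    have cX2 : coeff (Finsupp.single 1 1) (X (2:Fin 3) : R3) = 0 := by
      rw [← hμ, hX2tp, coeff_tp_mul_X2pow]
      simp
    have cS : ∀ (Q : ℕ) (p : ℕ → Polynomial ℂ),
        coeff (Finsupp.single 1 1) (∑ i ∈ Finset.range (Q + 1), tp (p i) * X 2 ^ i)
          = (p 0).coeff 1 := fun Q p => by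
      rw [← hμ, coeff_sum_tp]; simp
    have cC : ∀ y : ℂ, coeff (Finsupp.single (1:Fin 3) 1) (C y : R3) = 0 := fun y => by
      rw [coeff_C, if_neg]
      exact fun h => one_ne_zero (Finsupp.single_eq_zero.mp h.symm)
    have cCX1 : ∀ y : ℂ, coeff (Finsupp.single (1:Fin 3) 1) (C y * X 1 : R3) = y := fun y => by
      rw [coeff_C_mul, coeff_X, if_pos rfl, mul_one]
    -- a = a'
    have ea : ∀ m : ℤ, (m:ℂ) * (Polynomial.X * σ 0).coeff 1 + a * (m:ℂ)^2
        = (m:ℂ) * (Polynomial.X * σ' 0).coeff 1 + a' * (m:ℂ)^2 := fun m => by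
      have h := congrArg (coeff (Finsupp.single 1 1)) (keyYm m)
      rw [coeff_add, coeff_add, coeff_add, coeff_add, coeff_add, coeff_add,
        coeff_smul, coeff_smul, cS, cS, cX2, cC, cC, cCX1, cCX1] at h
      simpa using h
    have ha : a = a' := by
      have e1 := ea 1
      have e2 := ea 2
      push_cast at e1 e2
      linear_combination (e2 - 2 * e1) / 2
    subst ha
    -- b = b'
    have h0eq : (0 : Fin 3 →₀ ℕ) = Finsupp.single 1 0 + Finsupp.single 2 0 := by simp
    have c0S : ∀ (Q : ℕ) (p : ℕ → Polynomial ℂ),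
        coeff 0 (∑ i ∈ Finset.range (Q + 1), tp (Polynomial.X * p i) * X 2 ^ i) = 0 :=
      fun Q p => by
        rw [h0eq, coeff_sum_tp]
        simp [Polynomial.mul_coeff_zero]
    have hb : b = b' := by
      have h := congrArg (coeff 0) (keyYm 1)
      rw [coeff_add, coeff_add, coeff_add, coeff_add, coeff_add, coeff_add,
        coeff_smul, coeff_smul, c0S, c0S] at h
      simpa using h
    subst hb
    -- the sums agree
    have hSS : (∑ i ∈ Finset.range (q + 1), tp (Polynomial.X * σ i) * X 2 ^ i)
        = ∑ i ∈ Finset.range (q' + 1), tp (Polynomial.X * σ' i) * X 2 ^ i := by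
      have h := keyYm 1
      rw [show ((1:ℤ):ℂ) = 1 from by norm_num, one_smul, one_smul] at h
      have h1 := add_right_cancel h
      have h2 := add_right_cancel h1
      exact add_right_cancel h2
    have hcoef : ∀ j d : ℕ, (if j ≤ q then (Polynomial.X * σ j).coeff d else 0)
        = (if j ≤ q' then (Polynomial.X * σ' j).coeff d else 0) := fun j d => by
      have h := congrArg (coeff (Finsupp.single 1 d + Finsupp.single 2 j)) hSS
      rwa [coeff_sum_tp, coeff_sum_tp] at h
    have hq : q = q' := by
      by_contra hne
      rcases Nat.lt_or_ge q q' with hlt | hge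
      · have hz : Polynomial.X * σ' q' = 0 := Polynomial.ext fun d => by
          have h := hcoef q' d
          rw [if_neg (by omega), if_pos le_rfl] at h
          simpa using h.symm
        rcases mul_eq_zero.mp hz with h | h
        · exact Polynomial.X_ne_zero h
        · exact hσq' h
      · have hlt : q' < q := by omega
        have hz : Polynomial.X * σ q = 0 := Polynomial.ext fun d => by
          have h := hcoef q d
          rw [if_pos le_rfl, if_neg (by omega)] at h
          simpa using h
        rcases mul_eq_zero.mp hz with h | h
        · exact Polynomial.X_ne_zero h
        · exact hσq h
    subst hq
    -- σ agree
    have hσeq : ∀ i ≤ q, σ i = σ' i := fun i hi => by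
      have hXX : Polynomial.X * σ i = Polynomial.X * σ' i := Polynomial.ext fun d => by
        have h := hcoef i d
        rwa [if_pos hi, if_pos hi] at h
      exact mul_left_cancel₀ Polynomial.X_ne_zero hXX
    -- g agree
    have hgeq : ∀ j : ℤ, g j = g' j := fun j => by
      have h := keyL j
      rw [Lact_one, Lact_one] at h
      have h2 : (X 0 + Dcoef a b q σ g j : R3) = X 0 + Dcoef a b q σ' g' j :=
        smul_right_injective R3 (zpow_ne_zero j hlam) h
      have h3 := add_left_cancel h2
      rw [Dcoef_congr a b q σ σ' g j hσeq] at h3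
      unfold Dcoef at h3
      have h4 := add_left_cancel h3
      exact tp_inj h4
    exact ⟨rfl, rfl, rfl, rfl, hσeq, hgeq⟩
  · rintro ⟨rfl, rfl, rfl, rfl, hσ, hg⟩
    have hsum := sum_congr_X q σ σ' hσ
    have hD : ∀ m : ℤ, Dcoef a b q σ g m = Dcoef a b q σ' g' m := fun m => by
      rw [Dcoef_congr a b q σ σ' g m hσ]
      unfold Dcoef
      rw [hg m]
    refine ⟨LinearEquiv.refl ℂ R3, fun m f => ⟨?_, ?_, ?_⟩⟩ <;>
      simp only [LinearEquiv.refl_apply]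
    · unfold Lact
      rw [hD m, hsum]
    · unfold Yact
      rw [hsum]

end
end
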